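/- Let 0 < δ < √(ln 4). Then there exists a constant c_δ > 0 such that every digraph D of order n containing no directed triangle (directed cycle of length 3) satisfies α⃗(D) ≥ c_δ · exp(δ·√(ln n)). -/

import Mathlib

/-- A directed cycle of length `n` in the digraph with arc relation `A`:
an injective map `f : ZMod n → V` with an arc from each vertex to the next. -/
def IsDicycle {V : Type*} (A : V → V → Prop) (n : ℕ) (f : ZMod n → V) : Prop :=
  0 < n ∧ Function.Injective f ∧ ∀ i, A (f i) (f (i + 1))

/-- A set of vertices is acyclic if it contains no directed cycle. -/
def AcyclicSet {V : Type*} (A : V → V → Prop) (S : Set V) : Prop :=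
  ∀ (n : ℕ) (f : ZMod n → V), (∀ i, f i ∈ S) → ¬ IsDicycle A n f

/-- The dichromatic number: least `k` such that the vertices can be colored with `k`
colors with every color class acyclic. -/
noncomputable def dichromatic {V : Type*} (A : V → V → Prop) : ℕ :=
  sInf {k | ∃ c : V → Fin k, ∀ i, AcyclicSet A (c ⁻¹' {i})}

/-- The maximum size of an acyclic set of vertices. -/
noncomputable def maxAcyclic {V : Type*} [Fintype V] (A : V → V → Prop) : ℕ :=
  sSup {k | ∃ S : Finset V, AcyclicSet A ↑S ∧ S.card = k}


variable {V : Type*} {A : V → V → Prop}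

lemma acyclic_of_no_arcs {S : Set V} (h : ∀ x ∈ S, ∀ y ∈ S, ¬ A x y) :
    AcyclicSet A S := by
  rintro n f hf ⟨hn, _, harc⟩
  haveI : NeZero n := ⟨hn.ne'⟩
  exact h _ (hf 0) _ (hf 1) (by simpa using harc 0)

lemma acyclic_empty : AcyclicSet A (∅ : Set V) :=
  acyclic_of_no_arcs (by simp)

lemma acyclic_singleton (hA : Irreflexive A) (v : V) : AcyclicSet A {v} :=
  acyclic_of_no_arcs (by intro x hx y hy h; rw [Set.mem_singleton_iff] at hx hy; rw [hx, hy] at h; exact hA v h)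

lemma zmod_all_of_step {n : ℕ} (hn : 0 < n) {P : ZMod n → Prop}
    (i₀ : ZMod n) (h0 : P i₀) (hstep : ∀ i, P i → P (i + 1)) : ∀ i, P i := by
  haveI : NeZero n := ⟨hn.ne'⟩
  intro i
  have key : ∀ m : ℕ, P (i₀ + (m : ZMod n)) := by
    intro m
    induction m with
    | zero => simpa using h0
    | succ k ih => push_cast; rw [← add_assoc]; exact hstep _ ih
  have := key (i - i₀).val
  rwa [ZMod.natCast_val, ZMod.cast_id, add_sub_cancel] at this

lemma acyclic_union {S₁ S₂ : Set V} (h1 : AcyclicSet A S₁) (h2 : AcyclicSet A S₂)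
    (hcross : ∀ x ∈ S₁, ∀ y ∈ S₂, ¬ A x y) : AcyclicSet A (S₁ ∪ S₂) := by
  rintro n f hf hcyc
  obtain ⟨hn, hinj, harc⟩ := hcyc
  by_cases hall1 : ∀ i, f i ∈ S₁
  · exact h1 n f hall1 ⟨hn, hinj, harc⟩
  push_neg at hall1
  obtain ⟨i₂, hi₂⟩ := hall1
  have hi₂' : f i₂ ∈ S₂ := (hf i₂).resolve_left hi₂
  by_cases hall2 : ∀ i, f i ∈ S₂
  · exact h2 n f hall2 ⟨hn, hinj, harc⟩
  push_neg at hall2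
  obtain ⟨i₁, hi₁⟩ := hall2
  have hi₁' : f i₁ ∈ S₁ := (hf i₁).resolve_right hi₁
  by_cases hstep : ∀ i, f i ∈ S₁ → f (i + 1) ∈ S₁
  · exact hi₂ (zmod_all_of_step hn i₁ hi₁' hstep i₂)
  · push_neg at hstep
    obtain ⟨i, hiS, hi1⟩ := hstep
    have : f (i + 1) ∈ S₂ := (hf (i + 1)).resolve_left hi1
    exact hcross _ hiS _ this (harc i)

lemma acyclic_insert (hA : Irreflexive A) {T : Set V} (v : V) (hv : v ∉ T)
    (hnb : (∀ u ∈ T, ¬ A v u) ∨ (∀ u ∈ T, ¬ A u v)) (hT : AcyclicSet A T) :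
    AcyclicSet A (insert v T) := by
  rintro n f hf hcyc
  obtain ⟨hn, hinj, harc⟩ := hcyc
  by_cases hvr : ∃ i, f i = v
  · obtain ⟨i, hi⟩ := hvr
    haveI : NeZero n := ⟨hn.ne'⟩
    rcases hnb with hout | hin
    · have hmem : f (i + 1) ∈ insert v T := hf (i + 1)
      rcases hmem with h | h
      · exact hA v (by have h2 := harc i; rw [hi, h] at h2; exact h2)
      · exact hout _ h (hi ▸ harc i)
    · have hmem : f (i - 1) ∈ insert v T := hf (i - 1)
      have harc' : A (f (i - 1)) (f i) := by
        have := harc (i - 1); rwa [sub_add_cancel] at this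
      rcases hmem with h | h
      · exact hA v (by rw [hi, h] at harc'; exact harc')
      · exact hin _ h (hi ▸ harc')
  · push_neg at hvr
    have : ∀ i, f i ∈ T := fun i => (hf i).resolve_left (hvr i)
    exact hT n f this ⟨hn, hinj, harc⟩

lemma no_c3 (hA : Irreflexive A) (hC3 : ¬ ∃ f : ZMod 3 → V, IsDicycle A 3 f)
    {x y z : V} (h1 : A x y) (h2 : A y z) (h3 : A z x) : False := by
  have hxy : x ≠ y := fun h => hA y (h ▸ h1)
  have hyz : y ≠ z := fun h => hA z (h ▸ h2)
  have hzx : z ≠ x := fun h => hA x (h ▸ h3)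
  have htri : ∀ i : ZMod 3, i = 0 ∨ i = 1 ∨ i = 2 := by decide
  have e01 : (0 : ZMod 3) ≠ 1 := by decide
  have e02 : (0 : ZMod 3) ≠ 2 := by decide
  have e12 : (1 : ZMod 3) ≠ 2 := by decide
  apply hC3
  refine ⟨fun i => if i = 0 then x else if i = 1 then y else z, by norm_num, ?_, ?_⟩
  · intro i j hij
    rcases htri i with rfl|rfl|rfl <;> rcases htri j with rfl|rfl|rfl <;>
      simp_all [e01, e02, e12, e01.symm, e02.symm, e12.symm]
  · intro i
    have a01 : (0 : ZMod 3) + 1 = 1 := by decide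
    have a12 : (1 : ZMod 3) + 1 = 2 := by decide
    have a20 : (2 : ZMod 3) + 1 = 0 := by decide
    rcases htri i with rfl|rfl|rfl <;>
      simp [a01, a12, a20, e01, e02, e12, e01.symm, e02.symm, e12.symm, h1, h2, h3]

open scoped Classical in
lemma greedy [DecidableEq V] (hA : Irreflexive A) (K : ℕ) (hK : 1 ≤ K) :
    ∀ n : ℕ, ∀ S : Finset V, S.card ≤ n →
    (∀ S' ⊆ S, ∀ v ∈ S', (S'.filter (fun u => A v u)).card < K ∨
        (S'.filter (fun u => A u v)).card < K) →
    ∃ T ⊆ S, AcyclicSet A ↑T ∧ S.card ≤ K * T.card := by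
  intro n
  induction n with
  | zero =>
    intro S hS _
    refine ⟨∅, Finset.empty_subset _, by simpa using acyclic_empty, by omega⟩
  | succ n ih =>
    intro S hS hdeg
    rcases S.eq_empty_or_nonempty with rfl | ⟨v, hv⟩
    · exact ⟨∅, Finset.empty_subset _, by simpa using acyclic_empty, by simp⟩
    rcases hdeg S Finset.Subset.rfl v hv with hout | hin
    · set R := insert v (S.filter (fun u => A v u)) with hR
      set S' := S \ R with hS'
      have hvR : v ∈ R := Finset.mem_insert_self _ _
      have hS'sub : S' ⊆ S.erase v := by
        intro x hx
        rw [hS', Finset.mem_sdiff] at hx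
        exact Finset.mem_erase.2 ⟨fun h => hx.2 (h ▸ hvR), hx.1⟩
      have hS'card : S'.card ≤ n := by
        have := Finset.card_le_card hS'sub
        have := Finset.card_erase_of_mem hv
        omega
      obtain ⟨T', hT'sub, hT'ac, hT'card⟩ := ih S' hS'card
        (fun S'' hsub => hdeg S'' (hsub.trans ((Finset.sdiff_subset))))
      have hvT' : v ∉ T' := fun h => (Finset.mem_sdiff.1 (hT'sub h)).2 hvR
      refine ⟨insert v T', ?_, ?_, ?_⟩
      · exact Finset.insert_subset hv (hT'sub.trans Finset.sdiff_subset)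
      · rw [Finset.coe_insert]
        refine acyclic_insert hA v (by simpa using hvT') (Or.inl ?_) hT'ac
        intro u hu hAvu
        rcases Finset.mem_sdiff.1 (hT'sub (by simpa using hu)) with ⟨huS, huR⟩
        exact huR (Finset.mem_insert_of_mem (Finset.mem_filter.2 ⟨huS, hAvu⟩))
      · have h1 : S ⊆ S' ∪ R := by
          intro x hx
          by_cases hxR : x ∈ R
          · exact Finset.mem_union_right _ hxR
          · exact Finset.mem_union_left _ (Finset.mem_sdiff.2 ⟨hx, hxR⟩)
        have h2 : S.card ≤ S'.card + R.card :=
          le_trans (Finset.card_le_card h1) (Finset.card_union_le _ _)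
        have h3 : R.card ≤ K := by
          rw [hR]
          exact le_trans (Finset.card_insert_le _ _) (by omega)
        rw [Finset.card_insert_of_notMem hvT']
        have := Nat.mul_le_mul_left K (le_refl T'.card)
        calc S.card ≤ S'.card + R.card := h2
          _ ≤ K * T'.card + K := by omega
          _ = K * (T'.card + 1) := by ring
    · set R := insert v (S.filter (fun u => A u v)) with hR
      set S' := S \ R with hS'
      have hvR : v ∈ R := Finset.mem_insert_self _ _
      have hS'sub : S' ⊆ S.erase v := by
        intro x hx
        rw [hS', Finset.mem_sdiff] at hx
        exact Finset.mem_erase.2 ⟨fun h => hx.2 (h ▸ hvR), hx.1⟩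
      have hS'card : S'.card ≤ n := by
        have := Finset.card_le_card hS'sub
        have := Finset.card_erase_of_mem hv
        omega
      obtain ⟨T', hT'sub, hT'ac, hT'card⟩ := ih S' hS'card
        (fun S'' hsub => hdeg S'' (hsub.trans ((Finset.sdiff_subset))))
      have hvT' : v ∉ T' := fun h => (Finset.mem_sdiff.1 (hT'sub h)).2 hvR
      refine ⟨insert v T', ?_, ?_, ?_⟩
      · exact Finset.insert_subset hv (hT'sub.trans Finset.sdiff_subset)
      · rw [Finset.coe_insert]
        refine acyclic_insert hA v (by simpa using hvT') (Or.inr ?_) hT'ac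
        intro u hu hAuv
        rcases Finset.mem_sdiff.1 (hT'sub (by simpa using hu)) with ⟨huS, huR⟩
        exact huR (Finset.mem_insert_of_mem (Finset.mem_filter.2 ⟨huS, hAuv⟩))
      · have h1 : S ⊆ S' ∪ R := by
          intro x hx
          by_cases hxR : x ∈ R
          · exact Finset.mem_union_right _ hxR
          · exact Finset.mem_union_left _ (Finset.mem_sdiff.2 ⟨hx, hxR⟩)
        have h2 : S.card ≤ S'.card + R.card :=
          le_trans (Finset.card_le_card h1) (Finset.card_union_le _ _)
        have h3 : R.card ≤ K := by
          rw [hR]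
          exact le_trans (Finset.card_insert_le _ _) (by omega)
        rw [Finset.card_insert_of_notMem hvT']
        calc S.card ≤ S'.card + R.card := h2
          _ ≤ K * T'.card + K := by omega
          _ = K * (T'.card + 1) := by ring

open Filter Real

lemma sqrt_tendsto : Filter.Tendsto Real.sqrt atTop atTop := by
  rw [show Real.sqrt = fun x => x ^ (1/2:ℝ) from funext Real.sqrt_eq_rpow]
  exact tendsto_rpow_atTop (by norm_num)

lemma lin_beats_sqrt (c : ℝ) : Tendsto (fun u : ℝ => c * Real.sqrt u - u) atTop atBot := by
  have h2 : Tendsto (fun u : ℝ => c - Real.sqrt u) atTop atBot := by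
    simpa [sub_eq_add_neg] using tendsto_atBot_add_const_left _ c (tendsto_neg_atTop_atBot.comp sqrt_tendsto)
  have h : Tendsto (fun u : ℝ => Real.sqrt u * (c - Real.sqrt u)) atTop atBot :=
    sqrt_tendsto.atTop_mul_atBot₀ h2
  apply h.congr'
  filter_upwards [eventually_ge_atTop (0:ℝ)] with u hu
  rw [mul_sub, Real.mul_self_sqrt hu]; ring

/-- The asymptotic conditions needed for the induction at order `n`. -/
def BigCond (δ : ℝ) (n : ℕ) : Prop :=
  1 ≤ (n:ℝ) * Real.exp (-(δ * Real.sqrt (Real.log n))) ∧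
  Real.exp ((Real.sqrt (Real.log n) - Real.log 2 / δ)^2) ≤
    (⌊(n:ℝ) * Real.exp (-(δ * Real.sqrt (Real.log n)))⌋₊ : ℝ)
      - Real.exp (δ * Real.sqrt (Real.log n)) ∧
  Real.log 2 / δ ≤ Real.sqrt (Real.log n)

lemma exists_n0 (δ : ℝ) (hδ0 : 0 < δ) (hδ : δ < Real.sqrt (Real.log 4)) :
    ∃ n₀ : ℕ, ∀ n : ℕ, n₀ < n → BigCond δ n := by
  set b : ℝ := Real.log 2 / δ with hb
  set a : ℝ := 2 * b with ha
  have hlog2 : (0:ℝ) < Real.log 2 := Real.log_pos (by norm_num)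
  have hbpos : 0 < b := div_pos hlog2 hδ0
  have hda : δ < a := by
    have h4 : Real.log 4 = 2 * Real.log 2 := by
      rw [show (4:ℝ) = 2^2 by norm_num, Real.log_pow]; push_cast; ring
    have hδ2 : δ^2 < Real.log 4 := by
      have := Real.sq_sqrt (le_of_lt (by rw [h4]; positivity) : (0:ℝ) ≤ Real.log 4)
      nlinarith [hδ, Real.sqrt_nonneg (Real.log 4)]
    have hδδ : δ * δ < 2 * Real.log 2 := by nlinarith [hδ2, h4]
    rw [ha, hb, show 2 * (Real.log 2 / δ) = (2 * Real.log 2) / δ by ring,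
      lt_div_iff₀ hδ0]
    nlinarith
  -- eventual statement in u = log x
  have hG : ∀ᶠ u : ℝ in atTop,
      (0 ≤ u - δ * Real.sqrt u) ∧
      (Real.exp (u - a * Real.sqrt u + b^2) + Real.exp (δ * Real.sqrt u) + 1
        ≤ Real.exp (u - δ * Real.sqrt u)) ∧
      (b ≤ Real.sqrt u) := by
    have t1 : Tendsto (fun u : ℝ => Real.exp (b^2 + (δ - a) * Real.sqrt u)) atTop (nhds 0) := by
      apply Real.tendsto_exp_atBot.comp
      have : Tendsto (fun u : ℝ => -((a - δ) * Real.sqrt u)) atTop atBot := by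
        apply tendsto_neg_atTop_atBot.comp
        exact sqrt_tendsto.const_mul_atTop (by linarith)
      have h' := tendsto_atBot_add_const_left _ (b^2) this
      apply h'.congr
      intro u; ring_nf
    have t2 : Tendsto (fun u : ℝ => Real.exp (2 * δ * Real.sqrt u - u)) atTop (nhds 0) :=
      Real.tendsto_exp_atBot.comp (lin_beats_sqrt (2*δ))
    have t3 : Tendsto (fun u : ℝ => Real.exp (δ * Real.sqrt u - u)) atTop (nhds 0) :=
      Real.tendsto_exp_atBot.comp (lin_beats_sqrt δ)
    have tsum : Tendsto (fun u : ℝ =>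
        Real.exp (b^2 + (δ - a) * Real.sqrt u) + Real.exp (2 * δ * Real.sqrt u - u)
          + Real.exp (δ * Real.sqrt u - u)) atTop (nhds 0) := by
      simpa using (t1.add t2).add t3
    have hsum_le : ∀ᶠ u : ℝ in atTop,
        Real.exp (b^2 + (δ - a) * Real.sqrt u) + Real.exp (2 * δ * Real.sqrt u - u)
          + Real.exp (δ * Real.sqrt u - u) ≤ 1 :=
      tsum.eventually (eventually_le_nhds (by norm_num))
    have hG1 : ∀ᶠ u : ℝ in atTop, 0 ≤ u - δ * Real.sqrt u := by
      filter_upwards [(lin_beats_sqrt δ).eventually_le_atBot 0] with u hu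
      linarith
    filter_upwards [hsum_le, hG1, sqrt_tendsto.eventually_ge_atTop b] with u hsum h1 h3
    refine ⟨h1, ?_, h3⟩
    have hpos : 0 < Real.exp (u - δ * Real.sqrt u) := Real.exp_pos _
    have := mul_le_mul_of_nonneg_right hsum (le_of_lt hpos)
    calc Real.exp (u - a * Real.sqrt u + b^2) + Real.exp (δ * Real.sqrt u) + 1
        = (Real.exp (b^2 + (δ - a) * Real.sqrt u) + Real.exp (2 * δ * Real.sqrt u - u)
          + Real.exp (δ * Real.sqrt u - u)) * Real.exp (u - δ * Real.sqrt u) := by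
          rw [add_mul, add_mul, ← Real.exp_add, ← Real.exp_add, ← Real.exp_add]
          ring_nf
          rw [Real.exp_zero]
          ring
      _ ≤ 1 * Real.exp (u - δ * Real.sqrt u) := this
      _ = Real.exp (u - δ * Real.sqrt u) := one_mul _
  -- transfer to x, then to ℕ
  have hX : ∀ᶠ x : ℝ in atTop,
      (1 ≤ x) ∧ ((0 ≤ Real.log x - δ * Real.sqrt (Real.log x)) ∧
      (Real.exp (Real.log x - a * Real.sqrt (Real.log x) + b^2)
        + Real.exp (δ * Real.sqrt (Real.log x)) + 1
        ≤ Real.exp (Real.log x - δ * Real.sqrt (Real.log x))) ∧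
      (b ≤ Real.sqrt (Real.log x))) :=
    (eventually_ge_atTop (1:ℝ)).and (Real.tendsto_log_atTop.eventually hG)
  have hN : ∀ᶠ n : ℕ in atTop, (1 ≤ ((n:ℕ):ℝ)) ∧ ((0 ≤ Real.log n - δ * Real.sqrt (Real.log n)) ∧
      (Real.exp (Real.log n - a * Real.sqrt (Real.log n) + b^2)
        + Real.exp (δ * Real.sqrt (Real.log n)) + 1
        ≤ Real.exp (Real.log n - δ * Real.sqrt (Real.log n))) ∧
      (b ≤ Real.sqrt (Real.log n))) :=
    tendsto_natCast_atTop_atTop.eventually hX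
  obtain ⟨n₀, hn₀⟩ := eventually_atTop.1 hN
  refine ⟨n₀, fun n hn => ?_⟩
  obtain ⟨hx1, h1, h2, h3⟩ := hn₀ n (le_of_lt hn)
  have hxpos : (0:ℝ) < n := lt_of_lt_of_le one_pos hx1
  have hexp : (n:ℝ) * Real.exp (-(δ * Real.sqrt (Real.log n)))
      = Real.exp (Real.log n - δ * Real.sqrt (Real.log n)) := by
    rw [Real.exp_sub, Real.exp_neg, Real.exp_log hxpos]; rw [div_eq_mul_inv]
  have hLnn : 0 ≤ Real.log n := Real.log_nonneg hx1
  have hsq : (Real.sqrt (Real.log n) - b)^2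
      = Real.log n - a * Real.sqrt (Real.log n) + b^2 := by
    have := Real.sq_sqrt hLnn
    rw [ha]; nlinarith [this]
  refine ⟨?_, ?_, h3⟩
  · rw [hexp]
    calc (1:ℝ) = Real.exp 0 := (Real.exp_zero).symm
      _ ≤ _ := Real.exp_le_exp.2 h1
  · have hfloor : (n:ℝ) * Real.exp (-(δ * Real.sqrt (Real.log n))) - 1
        < (⌊(n:ℝ) * Real.exp (-(δ * Real.sqrt (Real.log n)))⌋₊ : ℝ) :=
      Nat.sub_one_lt_floor _
    rw [hsq]
    rw [← hexp] at h2
    linarith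

open scoped Classical in
lemma key (δ c : ℝ) (hδ0 : 0 < δ) (hc0 : 0 < c) (hc1 : c ≤ 1) (n₀ : ℕ)
    (hsmall : ∀ m : ℕ, m ≤ n₀ → c * Real.exp (δ * Real.sqrt (Real.log m)) ≤ 1)
    (hbig : ∀ n : ℕ, n₀ < n → BigCond δ n)
    {V : Type*} [Fintype V] [DecidableEq V] {A : V → V → Prop}
    (hA : Irreflexive A) (hC3 : ¬ ∃ f : ZMod 3 → V, IsDicycle A 3 f) :
    ∀ n : ℕ, ∀ S : Finset V, S.card = n → S.Nonempty →
      ∃ T : Finset V, T ⊆ S ∧ AcyclicSet A ↑T ∧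
        c * Real.exp (δ * Real.sqrt (Real.log n)) ≤ (T.card : ℝ) := by
  intro n
  induction n using Nat.strong_induction_on with
  | _ n ih =>
  intro S hcard hne
  by_cases hn0 : n ≤ n₀
  · obtain ⟨v, hv⟩ := hne
    refine ⟨{v}, Finset.singleton_subset_iff.2 hv, by simpa using acyclic_singleton hA v, ?_⟩
    simp only [Finset.card_singleton, Nat.cast_one]
    exact hsmall n hn0
  push_neg at hn0
  obtain ⟨hB1, hB2, hB3⟩ := hbig n hn0
  set s : ℝ := Real.sqrt (Real.log n) with hs
  set hrn : ℝ := Real.exp (δ * s) with hhrn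
  set K : ℕ := ⌊(n:ℝ) * Real.exp (-(δ * s))⌋₊ with hKdef
  set E : ℝ := Real.exp ((s - Real.log 2 / δ)^2) with hE
  have hrn1 : 1 ≤ hrn := Real.one_le_exp (by positivity)
  have hrnpos : 0 < hrn := Real.exp_pos _
  have hE1 : (1:ℝ) ≤ E := Real.one_le_exp (sq_nonneg _)
  have hK1 : 1 ≤ K := Nat.le_floor (by exact_mod_cast hB1)
  have hKE : E + hrn ≤ (K : ℝ) := by linarith [hB2]
  by_cases hcase : ∃ v ∈ S, K ≤ (S.filter (fun u => A v u)).card ∧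
      K ≤ (S.filter (fun u => A u v)).card
  · obtain ⟨v, hvS, hdo, hdi⟩ := hcase
    set M : Finset V := S.filter (fun u => A v u ∧ A u v) with hM
    by_cases hMbig : c * hrn ≤ (M.card : ℝ)
    · refine ⟨M, Finset.filter_subset _ _, ?_, hMbig⟩
      apply acyclic_of_no_arcs
      intro x hx y hy hxy
      have hx' := Finset.mem_filter.1 (by simpa using hx : x ∈ M)
      have hy' := Finset.mem_filter.1 (by simpa using hy : y ∈ M)
      exact no_c3 hA hC3 hx'.2.1 hxy hy'.2.2
    · push_neg at hMbig
      set Bp : Finset V := S.filter (fun u => A v u ∧ ¬ A u v) with hBp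
      set Bm : Finset V := S.filter (fun u => A u v ∧ ¬ A v u) with hBm
      have hgap : E ≤ (K:ℝ) - c * hrn := by nlinarith
      have houtsub : S.filter (fun u => A v u) ⊆ M ∪ Bp := by
        intro u hu
        obtain ⟨huS, hAvu⟩ := Finset.mem_filter.1 hu
        by_cases h : A u v
        · exact Finset.mem_union_left _ (Finset.mem_filter.2 ⟨huS, hAvu, h⟩)
        · exact Finset.mem_union_right _ (Finset.mem_filter.2 ⟨huS, hAvu, h⟩)
      have hinsub : S.filter (fun u => A u v) ⊆ M ∪ Bm := by
        intro u hu
        obtain ⟨huS, hAuv⟩ := Finset.mem_filter.1 hu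
        by_cases h : A v u
        · exact Finset.mem_union_left _ (Finset.mem_filter.2 ⟨huS, h, hAuv⟩)
        · exact Finset.mem_union_right _ (Finset.mem_filter.2 ⟨huS, hAuv, h⟩)
      have hBpE : E ≤ (Bp.card : ℝ) := by
        have h1 : K ≤ M.card + Bp.card :=
          le_trans hdo (le_trans (Finset.card_le_card houtsub) (Finset.card_union_le _ _))
        have h1' : (K:ℝ) ≤ (M.card : ℝ) + (Bp.card : ℝ) := by exact_mod_cast h1
        nlinarith
      have hBmE : E ≤ (Bm.card : ℝ) := by
        have h1 : K ≤ M.card + Bm.card :=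
          le_trans hdi (le_trans (Finset.card_le_card hinsub) (Finset.card_union_le _ _))
        have h1' : (K:ℝ) ≤ (M.card : ℝ) + (Bm.card : ℝ) := by exact_mod_cast h1
        nlinarith
      -- the "half" bound
      have hhalf : ∀ m : ℕ, E ≤ (m:ℝ) → c * hrn / 2 ≤ c * Real.exp (δ * Real.sqrt (Real.log m)) := by
        intro m hm
        have hEpos : (0:ℝ) < E := Real.exp_pos _
        have hlogE : Real.log E = (s - Real.log 2 / δ)^2 := by rw [hE, Real.log_exp]
        have hlog : (s - Real.log 2 / δ)^2 ≤ Real.log m := by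
          rw [← hlogE]
          exact Real.log_le_log hEpos hm
        have hsqrt : s - Real.log 2 / δ ≤ Real.sqrt (Real.log m) := by
          have h1 := Real.sqrt_le_sqrt hlog
          rw [Real.sqrt_sq_eq_abs] at h1
          calc s - Real.log 2 / δ ≤ |s - Real.log 2 / δ| := le_abs_self _
            _ ≤ _ := h1
        have hmul : δ * s - Real.log 2 ≤ δ * Real.sqrt (Real.log m) := by
          have := mul_le_mul_of_nonneg_left hsqrt (le_of_lt hδ0)
          have hdb : δ * (Real.log 2 / δ) = Real.log 2 := by field_simp
          nlinarith
        have hexp : hrn / 2 ≤ Real.exp (δ * Real.sqrt (Real.log m)) := by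
          have := Real.exp_le_exp.2 hmul
          rw [Real.exp_sub, Real.exp_log (by norm_num : (0:ℝ) < 2)] at this
          rw [hhrn]
          linarith
        have := mul_le_mul_of_nonneg_left hexp (le_of_lt hc0)
        linarith
      -- apply induction hypothesis to Bp and Bm
      have hBplt : Bp.card < n := by
        have hsub : Bp ⊆ S.erase v := by
          intro u hu
          obtain ⟨huS, hAvu, _⟩ := Finset.mem_filter.1 hu
          exact Finset.mem_erase.2 ⟨fun h => hA v (h ▸ hAvu), huS⟩
        have h1 := Finset.card_le_card hsub
        have h2 := Finset.card_erase_of_mem hvS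
        have h3 : 1 ≤ S.card := Finset.card_pos.2 ⟨v, hvS⟩
        omega
      have hBmlt : Bm.card < n := by
        have hsub : Bm ⊆ S.erase v := by
          intro u hu
          obtain ⟨huS, _, hAvu⟩ := Finset.mem_filter.1 hu
          exact Finset.mem_erase.2 ⟨fun h => (Finset.mem_filter.1 hu).2.2 (h ▸ (Finset.mem_filter.1 hu).2.1), huS⟩
        have h1 := Finset.card_le_card hsub
        have h2 := Finset.card_erase_of_mem hvS
        have h3 : 1 ≤ S.card := Finset.card_pos.2 ⟨v, hvS⟩
        omega
      have hBpne : Bp.Nonempty := by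
        have h1 : (1:ℝ) ≤ (Bp.card : ℝ) := le_trans hE1 hBpE
        have h2 : 1 ≤ Bp.card := by exact_mod_cast h1
        exact Finset.card_pos.1 (by omega)
      have hBmne : Bm.Nonempty := by
        have h1 : (1:ℝ) ≤ (Bm.card : ℝ) := le_trans hE1 hBmE
        have h2 : 1 ≤ Bm.card := by exact_mod_cast h1
        exact Finset.card_pos.1 (by omega)
      obtain ⟨Tp, hTpsub, hTpac, hTpcard⟩ := ih Bp.card hBplt Bp rfl hBpne
      obtain ⟨Tm, hTmsub, hTmac, hTmcard⟩ := ih Bm.card hBmlt Bm rfl hBmne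
      have hTpc : c * hrn / 2 ≤ (Tp.card : ℝ) := le_trans (hhalf _ hBpE) hTpcard
      have hTmc : c * hrn / 2 ≤ (Tm.card : ℝ) := le_trans (hhalf _ hBmE) hTmcard
      have hdisj : Disjoint Tp Tm := by
        rw [Finset.disjoint_left]
        intro x hxp hxm
        have h1 := (Finset.mem_filter.1 (hTpsub hxp)).2.2
        have h2 := (Finset.mem_filter.1 (hTmsub hxm)).2.1
        exact h1 h2
      refine ⟨Tp ∪ Tm, ?_, ?_, ?_⟩
      · exact Finset.union_subset (hTpsub.trans (Finset.filter_subset _ _))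
          (hTmsub.trans (Finset.filter_subset _ _))
      · rw [Finset.coe_union]
        apply acyclic_union hTpac hTmac
        intro x hx y hy hAxy
        have hx' := Finset.mem_filter.1 (hTpsub (by simpa using hx : x ∈ Tp))
        have hy' := Finset.mem_filter.1 (hTmsub (by simpa using hy : y ∈ Tm))
        exact no_c3 hA hC3 hx'.2.1 hAxy hy'.2.1
      · rw [Finset.card_union_of_disjoint hdisj]
        push_cast
        linarith
  · push_neg at hcase
    obtain ⟨T, hTsub, hTac, hTcard⟩ := greedy hA K hK1 n S (le_of_eq hcard)
      (fun S' hsub v hv => by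
        by_cases h : (S.filter (fun u => A v u)).card < K
        · exact Or.inl (lt_of_le_of_lt
            (Finset.card_le_card (Finset.filter_subset_filter _ hsub)) h)
        · exact Or.inr (lt_of_le_of_lt
            (Finset.card_le_card (Finset.filter_subset_filter _ hsub))
            (hcase v (hsub hv) (le_of_not_gt h))))
    refine ⟨T, hTsub, hTac, ?_⟩
    have hKle : (K : ℝ) ≤ (n:ℝ) * Real.exp (-(δ * s)) := Nat.floor_le (by positivity)
    have hmul : (K : ℝ) * hrn ≤ (n:ℝ) := by
      have := mul_le_mul_of_nonneg_right hKle (le_of_lt hrnpos)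
      rw [mul_assoc, ← Real.exp_add] at this
      simpa using this
    have hnT : (n : ℝ) ≤ (K : ℝ) * (T.card : ℝ) := by
      rw [← hcard]; exact_mod_cast hTcard
    have hKpos : (0:ℝ) < K := by exact_mod_cast hK1
    have hrT : hrn ≤ (T.card : ℝ) :=
      le_of_mul_le_mul_left (le_trans hmul hnT) hKpos
    have hch : c * hrn ≤ hrn := by
      have := mul_le_mul_of_nonneg_right hc1 (le_of_lt hrnpos)
      linarith
    linarith

/-- For every `0 < δ < √(ln 4)` there is a constant `c_δ > 0` such that
every (loop-free) digraph of order `n ≥ 1` with no directed triangle satisfies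
`α⃗(D) ≥ c_δ · exp(δ·√(ln n))`. -/
theorem stmt11 (δ : ℝ) (hδ0 : 0 < δ) (hδ : δ < Real.sqrt (Real.log 4)) :
    ∃ c : ℝ, 0 < c ∧ ∀ (V : Type) [Fintype V] (A : V → V → Prop),
      Nonempty V → Irreflexive A →
      (¬ ∃ f : ZMod 3 → V, IsDicycle A 3 f) →
      c * Real.exp (δ * Real.sqrt (Real.log (Fintype.card V))) ≤ (maxAcyclic A : ℝ) := by
  obtain ⟨n₀, hbig⟩ := exists_n0 δ hδ0 hδ
  set c : ℝ := (Real.exp (δ * Real.sqrt (Real.log (n₀+1))))⁻¹ with hc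
  have hexp1 : 1 ≤ Real.exp (δ * Real.sqrt (Real.log (n₀+1))) :=
    Real.one_le_exp (by positivity)
  have hc0 : 0 < c := by rw [hc]; positivity
  have hc1 : c ≤ 1 := by
    rw [hc]
    exact inv_le_one_of_one_le₀ hexp1
  have hsmall : ∀ m : ℕ, m ≤ n₀ → c * Real.exp (δ * Real.sqrt (Real.log m)) ≤ 1 := by
    intro m hm
    have hlog : Real.log m ≤ Real.log (n₀+1) := by
      rcases Nat.eq_zero_or_pos m with rfl | hm0
      · simpa using Real.log_nonneg (by push_cast; linarith)
      · apply Real.log_le_log (by exact_mod_cast hm0)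
        push_cast
        have : (m:ℝ) ≤ (n₀:ℝ) := by exact_mod_cast hm
        linarith
    have h2 : Real.exp (δ * Real.sqrt (Real.log m))
        ≤ Real.exp (δ * Real.sqrt (Real.log (n₀+1))) := by
      apply Real.exp_le_exp.2
      exact mul_le_mul_of_nonneg_left (Real.sqrt_le_sqrt hlog) (le_of_lt hδ0)
    calc c * Real.exp (δ * Real.sqrt (Real.log m))
        ≤ c * Real.exp (δ * Real.sqrt (Real.log (n₀+1))) :=
          mul_le_mul_of_nonneg_left h2 (le_of_lt hc0)
      _ = 1 := by rw [hc]; exact inv_mul_cancel₀ (Real.exp_ne_zero _)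
  refine ⟨c, hc0, ?_⟩
  intro V _ A hne hirr hC3
  haveI := hne
  haveI := Classical.decEq V
  obtain ⟨T, hTsub, hTac, hTcard⟩ := key δ c hδ0 hc0 hc1 n₀ hsmall hbig hirr hC3
      (Fintype.card V) Finset.univ (Finset.card_univ) Finset.univ_nonempty
  have hmax : T.card ≤ maxAcyclic A := by
    apply le_csSup
    · refine ⟨Fintype.card V, ?_⟩
      rintro k ⟨S, _, rfl⟩
      exact Finset.card_le_univ S
    · exact ⟨T, hTac, rfl⟩
  calc c * Real.exp (δ * Real.sqrt (Real.log (Fintype.card V))) ≤ (T.card:ℝ) := hTcard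
    _ ≤ (maxAcyclic A : ℝ) := by exact_mod_cast hmax
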